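/- Let k >= 1 and let d = (d_1, ..., d_k) be a vector of nonnegative integers. Then \sum over all pairs of vectors b, c \in \mathbb{N}^k with b + c = d (componentwise) of (t^{-1} q)^{b_1 + ... + b_k} q^{b_1^2 + ... + b_k^2 + 2 \sum_{i=1}^{k-1} b_{i+1} (d_1 + ... + d_i)} / (\prod_{i=1}^{k} (q^2;q^2)_{b_i} (q^2;q^2)_{c_i}) = (-t^{-1} q^2; q^2)_{d_1 + ... + d_k} / \prod_{i=1}^{k} (q^2;q^2)_{d_i}. -/

import Mathlib

open Finset

/-- The Pochhammer symbol `(x; q)_n = ∏_{j=0}^{n-1} (1 - x q^j)`. -/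
noncomputable def qPoch {K : Type*} [Field K] (x q : K) (n : ℕ) : K :=
  ∏ j ∈ Finset.range n, (1 - x * q ^ j)

section Aux
variable {K : Type*} [Field K]

lemma qPoch_zero (x Q : K) : qPoch x Q 0 = 1 := Finset.prod_range_zero _

lemma qPoch_succ (x Q : K) (n : ℕ) : qPoch x Q (n + 1) = qPoch x Q n * (1 - x * Q ^ n) :=
  Finset.prod_range_succ _ _

lemma qPoch_add (x Q : K) (m n : ℕ) :
    qPoch x Q (m + n) = qPoch x Q m * qPoch (x * Q ^ m) Q n := by
  unfold qPoch
  rw [Finset.prod_range_add]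
  congr 1
  refine Finset.prod_congr rfl fun j _ => ?_
  rw [pow_add]; ring

lemma two_mul_choose_two (a : ℕ) : 2 * a.choose 2 + a = a * a := by
  induction a with
  | zero => simp
  | succ n ih =>
    have h : (n + 1) * (n + 1) = n * n + 2 * n + 1 := by ring
    rw [h, ← ih, Nat.choose_succ_succ, Nat.choose_one_right]
    ring

lemma qPoch_neg_succ' (x Q : K) (n : ℕ) :
    qPoch (-x) Q (n + 1) = (1 + x) * qPoch (-(x * Q)) Q n := by
  unfold qPoch
  rw [Finset.prod_range_succ' (fun j => 1 - (-x) * Q ^ j) n]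
  rw [Finset.prod_congr rfl (fun j _ => show 1 - (-x) * Q ^ (j + 1) = 1 - (-(x * Q)) * Q ^ j by
    rw [pow_succ]; ring)]
  rw [pow_zero]
  ring

lemma qbin (Q : K) (hP : ∀ n, qPoch Q Q n ≠ 0) :
    ∀ (d : ℕ) (x : K), ∑ b ∈ Finset.range (d + 1),
      Q ^ (b.choose 2) * x ^ b / (qPoch Q Q b * qPoch Q Q (d - b))
      = qPoch (-x) Q d / qPoch Q Q d := by
  have hfac : ∀ n : ℕ, (1 - Q * Q ^ n) ≠ 0 := by
    intro n h
    exact hP (n + 1) (by rw [qPoch_succ, h, mul_zero])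
  intro d
  induction d with
  | zero => intro x; simp [qPoch]
  | succ d ih =>
    intro x
    have key : ∀ b ∈ Finset.range (d + 2),
        Q ^ (b.choose 2) * x ^ b / (qPoch Q Q b * qPoch Q Q (d + 1 - b))
        = ((if b = d + 1 then 0 else
              Q ^ (b.choose 2) * (x * Q) ^ b / (qPoch Q Q b * qPoch Q Q (d - b)))
          + (if b = 0 then 0 else
              x * (Q ^ ((b - 1).choose 2) * (x * Q) ^ (b - 1) /
                (qPoch Q Q (b - 1) * qPoch Q Q (d - (b - 1)))))) / (1 - Q * Q ^ d) := by
      intro b hb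
      have hblt : b < d + 2 := Finset.mem_range.mp hb
      rcases Nat.eq_zero_or_pos b with hb0 | hbpos
      · subst hb0
        rw [if_neg (by omega : ¬ (0 = d + 1)), if_pos rfl, add_zero, Nat.sub_zero, Nat.sub_zero,
          qPoch_succ, qPoch_zero]
        field_simp
      · by_cases hbd : b = d + 1
        · subst hbd
          rw [if_pos rfl, if_neg (by omega : ¬ (d + 1 = 0)), zero_add, Nat.add_sub_cancel,
            Nat.sub_self, Nat.sub_self, qPoch_succ, qPoch_zero, Nat.choose_succ_succ,
            Nat.choose_one_right, pow_add]
          field_simp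
          ring
        · obtain ⟨m, rfl⟩ : ∃ m, b = m + 1 := ⟨b - 1, by omega⟩
          obtain ⟨e, rfl⟩ : ∃ e, d = m + 1 + e := ⟨d - (m + 1), by omega⟩
          rw [if_neg hbd, if_neg (by omega : ¬ (m + 1 = 0)), Nat.add_sub_cancel]
          have h1 : m + 1 + e + 1 - (m + 1) = e + 1 := by omega
          have h2 : m + 1 + e - (m + 1) = e := by omega
          have h3 : m + 1 + e - m = e + 1 := by omega
          rw [h1, h2, h3, qPoch_succ Q Q m, qPoch_succ Q Q e, Nat.choose_succ_succ,
            Nat.choose_one_right, pow_add, ← mul_div_assoc,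
            div_add_div _ _
              (mul_ne_zero (mul_ne_zero (hP m) (hfac m)) (hP e))
              (mul_ne_zero (hP m) (mul_ne_zero (hP e) (hfac e))),
            div_div,
            div_eq_div_iff
              (mul_ne_zero (mul_ne_zero (hP m) (hfac m)) (mul_ne_zero (hP e) (hfac e)))
              (mul_ne_zero
                (mul_ne_zero (mul_ne_zero (mul_ne_zero (hP m) (hfac m)) (hP e))
                  (mul_ne_zero (hP m) (mul_ne_zero (hP e) (hfac e))))
                (hfac (m + 1 + e)))]
          ring
    rw [Finset.sum_congr rfl key, ← Finset.sum_div, Finset.sum_add_distrib]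
    have hS1 : (∑ b ∈ Finset.range (d + 2), (if b = d + 1 then 0 else
        Q ^ (b.choose 2) * (x * Q) ^ b / (qPoch Q Q b * qPoch Q Q (d - b))))
        = qPoch (-(x * Q)) Q d / qPoch Q Q d := by
      rw [Finset.sum_range_succ, if_pos rfl, add_zero, ← ih (x * Q)]
      exact Finset.sum_congr rfl fun b hb => if_neg (by have := Finset.mem_range.mp hb; omega)
    have hS2 : (∑ b ∈ Finset.range (d + 2), (if b = 0 then 0 else
        x * (Q ^ ((b - 1).choose 2) * (x * Q) ^ (b - 1) /
          (qPoch Q Q (b - 1) * qPoch Q Q (d - (b - 1))))))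
        = x * (qPoch (-(x * Q)) Q d / qPoch Q Q d) := by
      rw [Finset.sum_range_succ', if_pos rfl, add_zero, ← ih (x * Q), Finset.mul_sum]
      exact Finset.sum_congr rfl fun b hb => by
        rw [if_neg (by omega : ¬ (b + 1 = 0)), Nat.add_sub_cancel]
    rw [hS1, hS2, qPoch_neg_succ', qPoch_succ]
    field_simp [hP d, hfac d]
end Aux

lemma multi {K : Type*} [Field K] (q t : K) (hpoch : ∀ n : ℕ, qPoch (q ^ 2) (q ^ 2) n ≠ 0) :
    ∀ (k : ℕ) (d : Fin k → ℕ),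
    (∑ b : (i : Fin k) → Fin (d i + 1),
        (t⁻¹ * q) ^ (∑ i, ((b i : ℕ))) *
          q ^ ((∑ i, ((b i : ℕ)) ^ 2)
              + 2 * ∑ i, (b i : ℕ) * (∑ l ∈ Finset.univ.filter (fun l => l < i), d l)) /
          ∏ i, (qPoch (q ^ 2) (q ^ 2) ((b i : ℕ)) *
            qPoch (q ^ 2) (q ^ 2) (d i - (b i : ℕ))))
      = qPoch (-(t⁻¹) * q ^ 2) (q ^ 2) (∑ i, d i) /
          ∏ i, qPoch (q ^ 2) (q ^ 2) (d i) := by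
  intro k
  induction k with
  | zero => intro d; simp [qPoch]
  | succ k ih =>
    intro d
    set D : ℕ := ∑ i : Fin k, d (Fin.castSucc i) with hD
    have hpre_last : (∑ l ∈ Finset.univ.filter (fun l => l < Fin.last k), d l) = D := by
      rw [Finset.sum_filter, Fin.sum_univ_castSucc]
      simp [Fin.castSucc_lt_last]
      exact hD.symm
    have hpre_cast : ∀ j : Fin k,
        (∑ l ∈ Finset.univ.filter (fun l => l < Fin.castSucc j), d l)
        = ∑ l ∈ Finset.univ.filter (fun l => l < j), d (Fin.castSucc l) := by
      intro j
      rw [Finset.sum_filter, Finset.sum_filter, Fin.sum_univ_castSucc]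
      have hnl : ¬ (Fin.last k < Fin.castSucc j) := not_lt.mpr (Fin.castSucc_lt_last j).le
      simp [Fin.castSucc_lt_castSucc_iff, hnl]
    rw [← Equiv.sum_comp (Fin.snocEquiv (fun i : Fin (k + 1) => Fin (d i + 1)))]
    rw [Fintype.sum_prod_type]
    have key : ∀ (a : Fin (d (Fin.last k) + 1)) (b' : (i : Fin k) → Fin (d (Fin.castSucc i) + 1)),
        ((t⁻¹ * q) ^ ∑ i : Fin (k + 1), (((Fin.snocEquiv (fun i => Fin (d i + 1))) (a, b') i : ℕ))) *
            q ^ ((∑ i : Fin (k + 1), (((Fin.snocEquiv (fun i => Fin (d i + 1))) (a, b') i : ℕ)) ^ 2) +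
                2 * ∑ i : Fin (k + 1), (((Fin.snocEquiv (fun i => Fin (d i + 1))) (a, b') i : ℕ)) *
                  ∑ l ∈ Finset.filter (fun l => l < i) Finset.univ, d l) /
          ∏ i : Fin (k + 1), (qPoch (q ^ 2) (q ^ 2) (((Fin.snocEquiv (fun i => Fin (d i + 1))) (a, b') i : ℕ)) *
            qPoch (q ^ 2) (q ^ 2) (d i - (((Fin.snocEquiv (fun i => Fin (d i + 1))) (a, b') i : ℕ))))
        = (((t⁻¹ * q) ^ ∑ i : Fin k, ((b' i : ℕ))) *
            q ^ ((∑ i : Fin k, ((b' i : ℕ)) ^ 2) +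
                2 * ∑ i : Fin k, (b' i : ℕ) * ∑ l ∈ Finset.filter (fun l => l < i) Finset.univ, d (Fin.castSucc l)) /
            ∏ i : Fin k, (qPoch (q ^ 2) (q ^ 2) ((b' i : ℕ)) *
              qPoch (q ^ 2) (q ^ 2) (d (Fin.castSucc i) - (b' i : ℕ))))
          * ((q ^ 2) ^ ((a : ℕ).choose 2) * (t⁻¹ * q ^ 2 * (q ^ 2) ^ D) ^ (a : ℕ) /
            (qPoch (q ^ 2) (q ^ 2) (a : ℕ) * qPoch (q ^ 2) (q ^ 2) (d (Fin.last k) - (a : ℕ)))) := by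
      intro a b'
      simp only [Fin.snocEquiv_apply, Fin.sum_univ_castSucc, Fin.prod_univ_castSucc,
        Fin.snoc_castSucc, Fin.snoc_last, hpre_cast, hpre_last]
      have hA : (t⁻¹ * q) ^ (a : ℕ) * q ^ ((a : ℕ) ^ 2 + 2 * ((a : ℕ) * D))
          = (q ^ 2) ^ ((a : ℕ).choose 2) * (t⁻¹ * q ^ 2 * (q ^ 2) ^ D) ^ (a : ℕ) := by
        have hexp : (a : ℕ) + ((a : ℕ) ^ 2 + 2 * ((a : ℕ) * D))
            = 2 * ((a : ℕ).choose 2) + (2 * (a : ℕ) + 2 * (D * (a : ℕ))) := by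
          rw [pow_two, ← two_mul_choose_two (a : ℕ)]; ring
        calc (t⁻¹ * q) ^ (a : ℕ) * q ^ ((a : ℕ) ^ 2 + 2 * ((a : ℕ) * D))
            = t⁻¹ ^ (a : ℕ) * q ^ ((a : ℕ) + ((a : ℕ) ^ 2 + 2 * ((a : ℕ) * D))) := by ring
          _ = t⁻¹ ^ (a : ℕ) * q ^ (2 * ((a : ℕ).choose 2) + (2 * (a : ℕ) + 2 * (D * (a : ℕ)))) := by
              rw [hexp]
          _ = _ := by ring
      rw [div_mul_div_comm, ← hA]
      ring
    rw [Finset.sum_congr rfl (fun a _ => Finset.sum_congr rfl (fun b' _ => key a b'))]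
    simp only [← Finset.sum_mul]
    rw [← Finset.mul_sum]
    have ihs := ih (fun i => d (Fin.castSucc i))
    simp only [] at ihs
    rw [ihs]
    have hF : (∑ a : Fin (d (Fin.last k) + 1),
        (q ^ 2) ^ ((a : ℕ).choose 2) * (t⁻¹ * q ^ 2 * (q ^ 2) ^ D) ^ (a : ℕ) /
          (qPoch (q ^ 2) (q ^ 2) (a : ℕ) * qPoch (q ^ 2) (q ^ 2) (d (Fin.last k) - (a : ℕ))))
        = qPoch (-(t⁻¹ * q ^ 2 * (q ^ 2) ^ D)) (q ^ 2) (d (Fin.last k)) /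
          qPoch (q ^ 2) (q ^ 2) (d (Fin.last k)) := by
      rw [Fin.sum_univ_eq_sum_range (fun m => (q ^ 2) ^ (m.choose 2) *
        (t⁻¹ * q ^ 2 * (q ^ 2) ^ D) ^ m / (qPoch (q ^ 2) (q ^ 2) m *
          qPoch (q ^ 2) (q ^ 2) (d (Fin.last k) - m))) (d (Fin.last k) + 1)]
      exact qbin (q ^ 2) hpoch (d (Fin.last k)) _
    rw [hF]
    rw [Fin.sum_univ_castSucc (f := d),
      Fin.prod_univ_castSucc (f := fun i => qPoch (q ^ 2) (q ^ 2) (d i)), ← hD,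
      qPoch_add (-t⁻¹ * q ^ 2) (q ^ 2) D (d (Fin.last k))]
    have hx : (-t⁻¹ * q ^ 2) * (q ^ 2) ^ D = -(t⁻¹ * q ^ 2 * (q ^ 2) ^ D) := by ring
    rw [hx, div_mul_div_comm]


theorem stmt13 {K : Type*} [Field K] (q t : K) (hq : q ≠ 0) (ht : t ≠ 0)
    (hpoch : ∀ n : ℕ, qPoch (q ^ 2) (q ^ 2) n ≠ 0)
    (k : ℕ) (hk : 1 ≤ k) (d : Fin k → ℕ) :
    (∑ b : (i : Fin k) → Fin (d i + 1),
        (t⁻¹ * q) ^ (∑ i, ((b i : ℕ))) *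
          q ^ ((∑ i, ((b i : ℕ)) ^ 2)
              + 2 * ∑ i, (b i : ℕ) * (∑ l ∈ Finset.univ.filter (fun l => l < i), d l)) /
          ∏ i, (qPoch (q ^ 2) (q ^ 2) ((b i : ℕ)) *
            qPoch (q ^ 2) (q ^ 2) (d i - (b i : ℕ))))
      = qPoch (-(t⁻¹) * q ^ 2) (q ^ 2) (∑ i, d i) /
          ∏ i, qPoch (q ^ 2) (q ^ 2) (d i) := by
  exact multi q t hpoch k d
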